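/- Fix σ > 0 and let 𝒢σ : ℝ² → ℝ be the isotropic Gaussian quantization kernel 𝒢σ(x) = (2πσ²)⁻¹ exp(−‖x‖²/(2σ²)). For every scale factor s > 0 with s ≠ 1, the scaling map g(x) = s x does not commute with quantization: there exist an integrable function I : ℝ² → ℝ and a point x ∈ ℝ² such that (𝒢σ ⋆ I)(s x) ≠ (𝒢σ ⋆ (I ∘ g))(x). Hence scale should not be canonized in the presence of quantization. -/

import Mathlib

open MeasureTheory

/-- The isotropic Gaussian quantization kernel on the plane at scale `σ`. -/
noncomputable def gauss2 (σ : ℝ) (x : EuclideanSpace ℝ (Fin 2)) : ℝ :=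
  (2 * Real.pi * σ ^ 2)⁻¹ * Real.exp (-‖x‖ ^ 2 / (2 * σ ^ 2))

lemma integrable_rexp_neg_mul_sq_norm' {b : ℝ} (hb : 0 < b) :
    Integrable (fun v : EuclideanSpace ℝ (Fin 2) ↦ Real.exp (-b * ‖v‖ ^ 2)) := by
  have h := (GaussianFourier.integrable_cexp_neg_mul_sq_norm_add
    (V := EuclideanSpace ℝ (Fin 2)) (b := (b : ℂ)) (by simpa using hb) 0 0).re
  refine h.congr (Filter.Eventually.of_forall fun v => ?_)
  have : (-(b : ℂ) * (‖v‖ : ℂ) ^ 2 + 0 * ((inner ℝ (0 : EuclideanSpace ℝ (Fin 2)) v : ℝ) : ℂ))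
      = ((-b * ‖v‖ ^ 2 : ℝ) : ℂ) := by push_cast; ring
  simp only [this, RCLike.re_to_complex, Complex.exp_ofReal_re]

lemma integral_rexp_neg_mul_sq_norm2 {b : ℝ} (hb : 0 < b) :
    ∫ v : EuclideanSpace ℝ (Fin 2), Real.exp (-b * ‖v‖ ^ 2) = Real.pi / b := by
  rw [GaussianFourier.integral_rexp_neg_mul_sq_norm hb]
  simp [finrank_euclideanSpace_fin]

/-- For every scale factor `s > 0`, `s ≠ 1`, the scaling map does not commute with
Gaussian quantization: there are an integrable image and a point where quantizing
then scaling differs from scaling then quantizing. -/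
theorem stmt_5 (σ : ℝ) (hσ : 0 < σ) (s : ℝ) (hs : 0 < s) (hs1 : s ≠ 1) :
    ∃ I : EuclideanSpace ℝ (Fin 2) → ℝ, Integrable I ∧
      ∃ x : EuclideanSpace ℝ (Fin 2),
        (∫ y, gauss2 σ (s • x - y) * I y) ≠ ∫ y, gauss2 σ (x - y) * I (s • y) := by
  have hσ2 : (0:ℝ) < σ ^ 2 := by positivity
  have hc : (0:ℝ) < (2 * Real.pi * σ ^ 2)⁻¹ := by positivity
  set c : ℝ := (2 * Real.pi * σ ^ 2)⁻¹ with hc_def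
  refine ⟨gauss2 σ, ?_, 0, ?_⟩
  · have h := (integrable_rexp_neg_mul_sq_norm' (b := (2 * σ ^ 2)⁻¹)
      (by positivity)).const_mul c
    refine h.congr (Filter.Eventually.of_forall fun v => ?_)
    simp only [gauss2, hc_def]
    congr 1
    rw [neg_div, div_eq_inv_mul, neg_mul]
  · have hL : (∫ y : EuclideanSpace ℝ (Fin 2), gauss2 σ (s • 0 - y) * gauss2 σ y)
        = c ^ 2 * (Real.pi / (σ ^ 2)⁻¹) := by
      rw [← integral_rexp_neg_mul_sq_norm2 (b := (σ ^ 2)⁻¹) (by positivity),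
        ← MeasureTheory.integral_const_mul]
      congr 1 with y
      simp only [gauss2, smul_zero, zero_sub, norm_neg, hc_def]
      rw [mul_mul_mul_comm, ← Real.exp_add, ← sq]
      congr 1
      field_simp
      ring
    have hR : (∫ y : EuclideanSpace ℝ (Fin 2), gauss2 σ ((0:EuclideanSpace ℝ (Fin 2)) - y)
          * gauss2 σ (s • y))
        = c ^ 2 * (Real.pi / ((1 + s ^ 2) / (2 * σ ^ 2))) := by
      rw [← integral_rexp_neg_mul_sq_norm2 (b := (1 + s ^ 2) / (2 * σ ^ 2)) (by positivity),
        ← MeasureTheory.integral_const_mul]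
      congr 1 with y
      simp only [gauss2, zero_sub, norm_neg, hc_def, norm_smul, Real.norm_eq_abs,
        abs_of_pos hs, mul_pow]
      rw [mul_mul_mul_comm, ← Real.exp_add, ← sq]
      congr 1
      field_simp
      ring
    rw [hL, hR]
    intro h
    have hπ := Real.pi_pos
    have h2 : Real.pi / (σ ^ 2)⁻¹ = Real.pi / ((1 + s ^ 2) / (2 * σ ^ 2)) := by
      have hc2 : c ^ 2 ≠ 0 := by positivity
      exact mul_left_cancel₀ hc2 h
    have h4 : s ^ 2 = 1 := by
      have hP : 0 < Real.pi * σ ^ 2 := mul_pos hπ hσ2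
      field_simp at h2
      have h2' : Real.pi * σ ^ 2 * (s ^ 2 - 1) = 0 := by linear_combination (Real.pi * σ ^ 2) * h2
      have := (mul_eq_zero.mp h2').resolve_left (ne_of_gt hP)
      linarith
    have : s = 1 := by nlinarith
    exact hs1 this
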